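/- Let η be a norm on ℝ², let A be a point of the unit η-circle, and let w ∈ [0, 2π(η)). For every sequence of n ≥ 1 points contained in cone(A, w), there exists a wake-up tree rooted at the origin spanning these points whose makespan (in the η-norm) is at most 1 + w·⌊log₂ n⌋. -/

import Mathlib

/-- Binary trees with labeled nodes. A wake-up tree with source `s` is modeled by the
subtree hanging at the unique child of the root (the root itself is labeled `s`). -/
inductive BTree (α : Type) where
  | nil : BTree α
  | node : α → BTree α → BTree α → BTree α

namespace BTree
/-- The multiset of labels of a binary tree. -/
def labels {α : Type} : BTree α → Multiset α
  | .nil => 0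
  | .node p l r => p ::ₘ (labels l + labels r)
end BTree

/-- `η` is a norm on `ℝ²`. -/
def IsNorm (η : ℝ × ℝ → ℝ) : Prop :=
  (∀ x, η x = 0 ↔ x = 0) ∧
  (∀ (a : ℝ) (x : ℝ × ℝ), η (a • x) = |a| * η x) ∧
  (∀ x y : ℝ × ℝ, η (x + y) ≤ η x + η y)

/-- The makespan of a wake-up tree: maximum total η-edge-length of a root-to-leaf path,
where the previous (parent) position is `s`. -/
noncomputable def makespan (η : ℝ × ℝ → ℝ) : ℝ × ℝ → BTree (ℝ × ℝ) → ℝ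
  | _, .nil => 0
  | s, .node p l r => η (p - s) + max (makespan η p l) (makespan η p r)

/-- `γₙ(η)`: sup over sequences of `n` points in the closed unit η-ball of the minimum
makespan of a wake-up tree rooted at the origin spanning them. -/
noncomputable def gammaN (η : ℝ × ℝ → ℝ) (n : ℕ) : ℝ :=
  sSup { m : ℝ | ∃ ps : List (ℝ × ℝ), ps.length = n ∧ (∀ p ∈ ps, η p ≤ 1) ∧
    m = sInf { t : ℝ | ∃ T : BTree (ℝ × ℝ), T.labels = ↑ps ∧ makespan η 0 T = t } }

/-- The wake-up ratio `γ(η) = sup_n γₙ(η)`. -/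
noncomputable def gamma (η : ℝ × ℝ → ℝ) : ℝ := sSup (Set.range (gammaN η))

/-- The ℓ1-norm on ℝ². -/
noncomputable def l1 (p : ℝ × ℝ) : ℝ := |p.1| + |p.2|
/-- η-variation (intrinsic length) of the curve `g` on `[a,b]`: sup over partitions. -/
noncomputable def etaVar (η : ℝ × ℝ → ℝ) (g : ℝ → ℝ × ℝ) (a b : ℝ) : ℝ :=
  sSup { L : ℝ | ∃ (m : ℕ) (θ : ℕ → ℝ), Monotone θ ∧ θ 0 = a ∧ θ m = b ∧
    L = ∑ i ∈ Finset.range m, η (g (θ (i + 1)) - g (θ i)) }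

/-- The point of the unit η-circle in direction of angle `θ`. -/
noncomputable def unitPoint (η : ℝ × ℝ → ℝ) (θ : ℝ) : ℝ × ℝ :=
  (η (Real.cos θ, Real.sin θ))⁻¹ • ((Real.cos θ, Real.sin θ) : ℝ × ℝ)

/-- `π(η)`: half the intrinsic length of the unit η-circle. -/
noncomputable def piEta (η : ℝ × ℝ → ℝ) : ℝ :=
  etaVar η (unitPoint η) 0 (2 * Real.pi) / 2

/-- `cone(A, w)` where `A = unitPoint η α`: union of segments `[O, X]` over points `X` of the
unit circle whose anticlockwise arc from `A` has length at most `w`. -/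
def cone (η : ℝ × ℝ → ℝ) (α w : ℝ) : Set (ℝ × ℝ) :=
  { x | ∃ θ t : ℝ, α ≤ θ ∧ etaVar η (unitPoint η) α θ ≤ w ∧
        0 ≤ t ∧ t ≤ 1 ∧ x = t • unitPoint η θ }

section AuxLemmas

variable {η : ℝ × ℝ → ℝ}

lemma eta_zero (hη : IsNorm η) : η 0 = 0 := (hη.1 0).mpr rfl

lemma eta_neg (hη : IsNorm η) (x : ℝ × ℝ) : η (-x) = η x := by
  have h := hη.2.1 (-1) x
  simpa using h

lemma eta_nonneg (hη : IsNorm η) (x : ℝ × ℝ) : 0 ≤ η x := by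
  have h := hη.2.2 x (-x)
  rw [add_neg_cancel, eta_zero hη, eta_neg hη] at h
  linarith

lemma eta_sub_le (hη : IsNorm η) (x y : ℝ × ℝ) : η x ≤ η (x - y) + η y := by
  have h := hη.2.2 (x - y) y
  simpa using h

lemma eta_sub_comm (hη : IsNorm η) (x y : ℝ × ℝ) : η (x - y) = η (y - x) := by
  rw [← eta_neg hη (x - y), neg_sub]

lemma abs_eta_sub (hη : IsNorm η) (x y : ℝ × ℝ) : |η x - η y| ≤ η (x - y) := by
  rw [abs_sub_le_iff]
  constructor
  · linarith [eta_sub_le hη x y]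
  · rw [eta_sub_comm hη x y]
    linarith [eta_sub_le hη y x]

lemma eta_coord (hη : IsNorm η) (x : ℝ × ℝ) :
    η x ≤ |x.1| * η (1, 0) + |x.2| * η (0, 1) := by
  have hx : x.1 • ((1 : ℝ), (0 : ℝ)) + x.2 • ((0 : ℝ), (1 : ℝ)) = x := by
    simp [Prod.ext_iff]
  calc η x = η (x.1 • ((1 : ℝ), (0 : ℝ)) + x.2 • ((0 : ℝ), (1 : ℝ))) := by rw [hx]
    _ ≤ η (x.1 • ((1 : ℝ), (0 : ℝ))) + η (x.2 • ((0 : ℝ), (1 : ℝ))) := hη.2.2 _ _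
    _ = |x.1| * η (1, 0) + |x.2| * η (0, 1) := by rw [hη.2.1, hη.2.1]

lemma eta_continuous (hη : IsNorm η) : Continuous η := by
  have hC0 : (0:ℝ) ≤ η (1, 0) + η (0, 1) := add_nonneg (eta_nonneg hη _) (eta_nonneg hη _)
  have key : ∀ x y : ℝ × ℝ, dist (η x) (η y) ≤ (η (1, 0) + η (0, 1)) * dist x y := by
    intro x y
    rw [Real.dist_eq]
    refine (abs_eta_sub hη x y).trans ?_
    refine (eta_coord hη (x - y)).trans ?_
    have h1 : |(x - y).1| ≤ dist x y := by
      rw [Prod.dist_eq]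
      have : |(x - y).1| = dist x.1 y.1 := by
        rw [Real.dist_eq]; rfl
      rw [this]; exact le_max_left _ _
    have h2 : |(x - y).2| ≤ dist x y := by
      rw [Prod.dist_eq]
      have : |(x - y).2| = dist x.2 y.2 := by
        rw [Real.dist_eq]; rfl
      rw [this]; exact le_max_right _ _
    have e1 : 0 ≤ η ((1 : ℝ), (0 : ℝ)) := eta_nonneg hη _
    have e2 : 0 ≤ η ((0 : ℝ), (1 : ℝ)) := eta_nonneg hη _
    nlinarith [mul_le_mul_of_nonneg_right h1 e1, mul_le_mul_of_nonneg_right h2 e2]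
  exact LipschitzWith.continuous (K := ⟨η (1, 0) + η (0, 1), hC0⟩)
    (LipschitzWith.of_dist_le_mul key)

lemma eta_circle_lb (hη : IsNorm η) :
    ∃ c : ℝ, 0 < c ∧ ∀ θ : ℝ, c ≤ η (Real.cos θ, Real.sin θ) := by
  set S : Set (ℝ × ℝ) := {v | v.1 ^ 2 + v.2 ^ 2 = 1} with hS
  have hcl : IsClosed S := isClosed_eq (by fun_prop) continuous_const
  have hbd : Bornology.IsBounded S := by
    refine (Metric.isBounded_closedBall (x := (0 : ℝ × ℝ)) (r := 1)).subset ?_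
    intro v hv
    have hv' : v.1 ^ 2 + v.2 ^ 2 = 1 := hv
    have h1 : |v.1| ≤ 1 := by
      rw [← sq_le_one_iff_abs_le_one]; nlinarith [sq_nonneg v.2]
    have h2 : |v.2| ≤ 1 := by
      rw [← sq_le_one_iff_abs_le_one]; nlinarith [sq_nonneg v.1]
    simp only [Metric.mem_closedBall, dist_zero_right, Prod.norm_def, Real.norm_eq_abs]
    exact max_le h1 h2
  have hcp : IsCompact S := Metric.isCompact_of_isClosed_isBounded hcl hbd
  obtain ⟨v₀, hv₀S, hmin⟩ := hcp.exists_isMinOn ⟨((1 : ℝ), (0 : ℝ)), by norm_num [hS]⟩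
    (eta_continuous hη).continuousOn
  refine ⟨η v₀, ?_, fun θ => isMinOn_iff.mp hmin _ ?_⟩
  · rcases lt_or_eq_of_le (eta_nonneg hη v₀) with h | h
    · exact h
    · exfalso
      have : v₀ = 0 := (hη.1 v₀).mp h.symm
      rw [this] at hv₀S
      simp [hS] at hv₀S
  · show (Real.cos θ) ^ 2 + (Real.sin θ) ^ 2 = 1
    exact Real.cos_sq_add_sin_sq θ

lemma eta_cs_ne (hη : IsNorm η) (θ : ℝ) : η (Real.cos θ, Real.sin θ) ≠ 0 := by
  intro h
  have h0 := (hη.1 _).mp h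
  have h1 : Real.cos θ = 0 ∧ Real.sin θ = 0 := by
    simpa [Prod.ext_iff] using h0
  have h2 := Real.cos_sq_add_sin_sq θ
  rw [h1.1, h1.2] at h2
  norm_num at h2

lemma eta_unitPoint (hη : IsNorm η) (θ : ℝ) : η (unitPoint η θ) = 1 := by
  have hne := eta_cs_ne hη θ
  have hpos : 0 < η (Real.cos θ, Real.sin θ) :=
    lt_of_le_of_ne (eta_nonneg hη _) (Ne.symm hne)
  rw [unitPoint, hη.2.1, abs_of_nonneg (inv_nonneg.mpr hpos.le), inv_mul_cancel₀ hne]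

lemma abs_cos_sub_cos_le (a b : ℝ) : |Real.cos a - Real.cos b| ≤ |a - b| := by
  rw [Real.cos_sub_cos]
  have h1 : |Real.sin ((a + b) / 2)| ≤ 1 :=
    abs_le.mpr ⟨Real.neg_one_le_sin _, Real.sin_le_one _⟩
  have h2 : |Real.sin ((a - b) / 2)| ≤ |a - b| / 2 := by
    have := Real.abs_sin_le_abs (x := (a - b) / 2)
    rwa [abs_div, abs_two] at this
  rw [abs_mul, abs_mul]
  have h3 : |(-2 : ℝ)| = 2 := by norm_num
  rw [h3]
  nlinarith [abs_nonneg (Real.sin ((a + b) / 2)), abs_nonneg (Real.sin ((a - b) / 2))]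

lemma abs_sin_sub_sin_le (a b : ℝ) : |Real.sin a - Real.sin b| ≤ |a - b| := by
  rw [Real.sin_sub_sin]
  have h1 : |Real.cos ((a + b) / 2)| ≤ 1 :=
    abs_le.mpr ⟨Real.neg_one_le_cos _, Real.cos_le_one _⟩
  have h2 : |Real.sin ((a - b) / 2)| ≤ |a - b| / 2 := by
    have := Real.abs_sin_le_abs (x := (a - b) / 2)
    rwa [abs_div, abs_two] at this
  rw [abs_mul, abs_mul]
  have h3 : |(2 : ℝ)| = 2 := by norm_num
  rw [h3]
  nlinarith [abs_nonneg (Real.cos ((a + b) / 2)), abs_nonneg (Real.sin ((a - b) / 2))]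

lemma unitPoint_lipschitz (hη : IsNorm η) :
    ∃ K : ℝ, ∀ θ₁ θ₂ : ℝ, η (unitPoint η θ₁ - unitPoint η θ₂) ≤ K * |θ₁ - θ₂| := by
  obtain ⟨c, hc0, hc⟩ := eta_circle_lb hη
  have g1 : 0 ≤ η ((1 : ℝ), (0 : ℝ)) := eta_nonneg hη _
  have g2 : 0 ≤ η ((0 : ℝ), (1 : ℝ)) := eta_nonneg hη _
  have hE0 : (0:ℝ) ≤ η (1, 0) + η (0, 1) := add_nonneg g1 g2
  have hci : (0:ℝ) ≤ c⁻¹ := inv_nonneg.mpr hc0.le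
  refine ⟨c⁻¹ * (η (1, 0) + η (0, 1)) +
    c⁻¹ * c⁻¹ * (η (1, 0) + η (0, 1)) * (η (1, 0) + η (0, 1)), ?_⟩
  intro θ₁ θ₂
  set v₁ : ℝ × ℝ := (Real.cos θ₁, Real.sin θ₁) with hv₁
  set v₂ : ℝ × ℝ := (Real.cos θ₂, Real.sin θ₂) with hv₂
  have hn₁ : c ≤ η v₁ := hc θ₁
  have hn₂ : c ≤ η v₂ := hc θ₂
  have hp₁ : 0 < η v₁ := lt_of_lt_of_le hc0 hn₁
  have hp₂ : 0 < η v₂ := lt_of_lt_of_le hc0 hn₂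
  have habs : 0 ≤ |θ₁ - θ₂| := abs_nonneg _
  have hη12 : 0 ≤ η (v₁ - v₂) := eta_nonneg hη _
  have hvv : η (v₁ - v₂) ≤ (η (1, 0) + η (0, 1)) * |θ₁ - θ₂| := by
    refine (eta_coord hη _).trans ?_
    have e1 : |(v₁ - v₂).1| ≤ |θ₁ - θ₂| := by
      have h : (v₁ - v₂).1 = Real.cos θ₁ - Real.cos θ₂ := rfl
      rw [h]; exact abs_cos_sub_cos_le θ₁ θ₂
    have e2 : |(v₁ - v₂).2| ≤ |θ₁ - θ₂| := by
      have h : (v₁ - v₂).2 = Real.sin θ₁ - Real.sin θ₂ := rfl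
      rw [h]; exact abs_sin_sub_sin_le θ₁ θ₂
    nlinarith [mul_le_mul_of_nonneg_right e1 g1, mul_le_mul_of_nonneg_right e2 g2]
  have hvC : η v₂ ≤ η (1, 0) + η (0, 1) := by
    refine (eta_coord hη v₂).trans ?_
    have e1 : |v₂.1| ≤ 1 := abs_le.mpr ⟨Real.neg_one_le_cos _, Real.cos_le_one _⟩
    have e2 : |v₂.2| ≤ 1 := abs_le.mpr ⟨Real.neg_one_le_sin _, Real.sin_le_one _⟩
    nlinarith [mul_le_mul_of_nonneg_right e1 g1, mul_le_mul_of_nonneg_right e2 g2]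
  have hsplit : unitPoint η θ₁ - unitPoint η θ₂ =
      (η v₁)⁻¹ • (v₁ - v₂) + ((η v₁)⁻¹ - (η v₂)⁻¹) • v₂ := by
    rw [unitPoint, unitPoint, ← hv₁, ← hv₂]
    module
  rw [hsplit]
  refine (hη.2.2 _ _).trans ?_
  rw [hη.2.1, hη.2.1]
  have hf₁ : |(η v₁)⁻¹| ≤ c⁻¹ := by
    rw [abs_of_nonneg (inv_nonneg.mpr hp₁.le)]
    exact inv_anti₀ hc0 hn₁
  have hf₂ : |(η v₂)⁻¹| ≤ c⁻¹ := by
    rw [abs_of_nonneg (inv_nonneg.mpr hp₂.le)]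
    exact inv_anti₀ hc0 hn₂
  have hfd : |(η v₁)⁻¹ - (η v₂)⁻¹| ≤ c⁻¹ * c⁻¹ * η (v₁ - v₂) := by
    have heq : (η v₁)⁻¹ - (η v₂)⁻¹ = (η v₂ - η v₁) * ((η v₁)⁻¹ * (η v₂)⁻¹) := by
      field_simp
    rw [heq, abs_mul, abs_mul]
    have a1 : |η v₂ - η v₁| ≤ η (v₁ - v₂) := by
      rw [abs_sub_comm]; exact abs_eta_sub hη v₁ v₂
    calc |η v₂ - η v₁| * (|(η v₁)⁻¹| * |(η v₂)⁻¹|)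
        ≤ η (v₁ - v₂) * (c⁻¹ * c⁻¹) := by
          refine mul_le_mul a1 (mul_le_mul hf₁ hf₂ (abs_nonneg _) hci) ?_ hη12
          exact mul_nonneg (abs_nonneg _) (abs_nonneg _)
      _ = c⁻¹ * c⁻¹ * η (v₁ - v₂) := by ring
  have hb1 : |(η v₁)⁻¹| * η (v₁ - v₂) ≤ c⁻¹ * ((η (1, 0) + η (0, 1)) * |θ₁ - θ₂|) :=
    mul_le_mul hf₁ hvv hη12 hci
  have hb2 : |(η v₁)⁻¹ - (η v₂)⁻¹| * η v₂ ≤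
      (c⁻¹ * c⁻¹ * ((η (1, 0) + η (0, 1)) * |θ₁ - θ₂|)) * (η (1, 0) + η (0, 1)) := by
    calc |(η v₁)⁻¹ - (η v₂)⁻¹| * η v₂
        ≤ (c⁻¹ * c⁻¹ * η (v₁ - v₂)) * (η (1, 0) + η (0, 1)) := by
          exact mul_le_mul hfd hvC (eta_nonneg hη _) (by positivity)
      _ ≤ (c⁻¹ * c⁻¹ * ((η (1, 0) + η (0, 1)) * |θ₁ - θ₂|)) * (η (1, 0) + η (0, 1)) := by
          have := mul_le_mul_of_nonneg_left hvv (mul_nonneg hci hci)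
          exact mul_le_mul_of_nonneg_right this hE0
  calc |(η v₁)⁻¹| * η (v₁ - v₂) + |(η v₁)⁻¹ - (η v₂)⁻¹| * η v₂
      ≤ c⁻¹ * ((η (1, 0) + η (0, 1)) * |θ₁ - θ₂|) +
        (c⁻¹ * c⁻¹ * ((η (1, 0) + η (0, 1)) * |θ₁ - θ₂|)) * (η (1, 0) + η (0, 1)) :=
        add_le_add hb1 hb2
    _ = (c⁻¹ * (η (1, 0) + η (0, 1)) +
        c⁻¹ * c⁻¹ * (η (1, 0) + η (0, 1)) * (η (1, 0) + η (0, 1))) * |θ₁ - θ₂| := by ring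

end AuxLemmas
section VarLemmas

variable {η : ℝ × ℝ → ℝ}

lemma etaVar_bddAbove (hη : IsNorm η) (a b : ℝ) :
    BddAbove { L : ℝ | ∃ (m : ℕ) (θ : ℕ → ℝ), Monotone θ ∧ θ 0 = a ∧ θ m = b ∧
      L = ∑ i ∈ Finset.range m, η (unitPoint η (θ (i + 1)) - unitPoint η (θ i)) } := by
  obtain ⟨K, hK⟩ := unitPoint_lipschitz hη
  refine ⟨K * (b - a), ?_⟩
  rintro L ⟨m, θf, hmono, h0, hm, rfl⟩
  calc ∑ i ∈ Finset.range m, η (unitPoint η (θf (i + 1)) - unitPoint η (θf i))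
      ≤ ∑ i ∈ Finset.range m, K * (θf (i + 1) - θf i) := by
        refine Finset.sum_le_sum fun i _ => ?_
        have h := hK (θf (i + 1)) (θf i)
        rwa [abs_of_nonneg (sub_nonneg.mpr (hmono (Nat.le_succ i)))] at h
    _ = K * (b - a) := by
        rw [← Finset.mul_sum, Finset.sum_range_sub]
        rw [h0, hm]

lemma chord_le_var (hη : IsNorm η) {a w θ₁ θ₂ : ℝ} (h1 : a ≤ θ₁) (h12 : θ₁ ≤ θ₂)
    (hv : etaVar η (unitPoint η) a θ₂ ≤ w) :
    η (unitPoint η θ₂ - unitPoint η θ₁) ≤ w := by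
  set θf : ℕ → ℝ := fun i => if i = 0 then a else if i = 1 then θ₁ else θ₂ with hθf
  have hmono : Monotone θf := by
    apply monotone_nat_of_le_succ
    intro n
    match n with
    | 0 => simpa [hθf] using h1
    | 1 => simpa [hθf] using h12
    | Nat.succ (Nat.succ k) => simp [hθf]
  have hel : η (unitPoint η (θf 1) - unitPoint η (θf 0)) +
      η (unitPoint η (θf 2) - unitPoint η (θf 1)) ∈
      { L : ℝ | ∃ (m : ℕ) (θ : ℕ → ℝ), Monotone θ ∧ θ 0 = a ∧ θ m = θ₂ ∧
        L = ∑ i ∈ Finset.range m, η (unitPoint η (θ (i + 1)) - unitPoint η (θ i)) } := by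
    refine ⟨2, θf, hmono, by simp [hθf], by simp [hθf], ?_⟩
    rw [Finset.sum_range_succ, Finset.sum_range_one]
  have hle := le_csSup (etaVar_bddAbove hη a θ₂) hel
  have hvar : etaVar η (unitPoint η) a θ₂ =
      sSup { L : ℝ | ∃ (m : ℕ) (θ : ℕ → ℝ), Monotone θ ∧ θ 0 = a ∧ θ m = θ₂ ∧
        L = ∑ i ∈ Finset.range m, η (unitPoint η (θ (i + 1)) - unitPoint η (θ i)) } := rfl
  rw [← hvar] at hle
  have hnn : 0 ≤ η (unitPoint η (θf 1) - unitPoint η (θf 0)) := eta_nonneg hη _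
  have hf1 : θf 1 = θ₁ := by simp [hθf]
  have hf2 : θf 2 = θ₂ := by simp [hθf]
  rw [hf1, hf2] at hle
  rw [hf1] at hnn
  linarith

lemma cone_chord (hη : IsNorm η) {a w θ₁ θ₂ : ℝ} (h1 : a ≤ θ₁) (h2 : a ≤ θ₂)
    (hv1 : etaVar η (unitPoint η) a θ₁ ≤ w) (hv2 : etaVar η (unitPoint η) a θ₂ ≤ w) :
    η (unitPoint η θ₁ - unitPoint η θ₂) ≤ w := by
  rcases le_total θ₁ θ₂ with h | h
  · rw [eta_sub_comm hη]
    exact chord_le_var hη h1 h hv2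
  · exact chord_le_var hη h2 h hv1

lemma cone_eta (hη : IsNorm η) {a w : ℝ} {x : ℝ × ℝ} (hx : x ∈ cone η a w) :
    η x ≤ 1 := by
  obtain ⟨θ, t, _, _, ht0, ht1, rfl⟩ := hx
  rw [hη.2.1, eta_unitPoint hη, abs_of_nonneg ht0]
  simpa using ht1

lemma cone_edge (hη : IsNorm η) {a w : ℝ} {p q : ℝ × ℝ}
    (hp : p ∈ cone η a w) (hq : q ∈ cone η a w) (hle : η q ≤ η p) :
    η (p - q) ≤ η p - η q + w := by
  obtain ⟨θ, t, hθ, hvθ, ht0, ht1, rfl⟩ := hp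
  obtain ⟨θ', s, hθ', hvθ', hs0, hs1, rfl⟩ := hq
  have hup : η (t • unitPoint η θ) = t := by
    rw [hη.2.1, eta_unitPoint hη, abs_of_nonneg ht0, mul_one]
  have huq : η (s • unitPoint η θ') = s := by
    rw [hη.2.1, eta_unitPoint hη, abs_of_nonneg hs0, mul_one]
  rw [hup, huq]
  rw [hup, huq] at hle
  have hsplit : t • unitPoint η θ - s • unitPoint η θ' =
      (t - s) • unitPoint η θ + s • (unitPoint η θ - unitPoint η θ') := by
    module
  rw [hsplit]
  refine (hη.2.2 _ _).trans ?_
  rw [hη.2.1, hη.2.1, eta_unitPoint hη, mul_one,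
    abs_of_nonneg (sub_nonneg.mpr hle), abs_of_nonneg hs0]
  have hchord : η (unitPoint η θ - unitPoint η θ') ≤ w :=
    cone_chord hη hθ hθ' hvθ hvθ'
  have : s * η (unitPoint η θ - unitPoint η θ') ≤ 1 * w :=
    mul_le_mul hs1 hchord (eta_nonneg hη _) zero_le_one
  linarith

end VarLemmas
def buildT : ℕ → List (ℝ × ℝ) → BTree (ℝ × ℝ)
  | 0, _ => .nil
  | _ + 1, [] => .nil
  | fuel + 1, p :: rest =>
      .node p (buildT fuel (rest.take (rest.length / 2)))
              (buildT fuel (rest.drop (rest.length / 2)))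

lemma buildT_nil (fuel : ℕ) : buildT fuel [] = .nil := by
  cases fuel <;> rfl

lemma buildT_labels : ∀ (fuel : ℕ) (l : List (ℝ × ℝ)), l.length ≤ fuel →
    (buildT fuel l).labels = ↑l := by
  intro fuel
  induction fuel with
  | zero =>
    intro l h
    have : l = [] := List.eq_nil_of_length_eq_zero (Nat.le_zero.mp h)
    subst this
    rfl
  | succ f ih =>
    intro l h
    cases l with
    | nil => rfl
    | cons p rest =>
      have hr : rest.length ≤ f := by
        simpa using h
      have h1 : (rest.take (rest.length / 2)).length ≤ f := by
        rw [List.length_take]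
        omega
      have h2 : (rest.drop (rest.length / 2)).length ≤ f := by
        rw [List.length_drop]
        omega
      show (BTree.node p _ _).labels = _
      rw [BTree.labels, ih _ h1, ih _ h2, Multiset.coe_add, List.take_append_drop,
        Multiset.cons_coe]

lemma buildT_makespan (η : ℝ × ℝ → ℝ) (hη : IsNorm η) (w : ℝ) (hw0 : 0 ≤ w)
    (C : Set (ℝ × ℝ)) (hC1 : ∀ x ∈ C, η x ≤ 1)
    (hedge : ∀ p q : ℝ × ℝ, p ∈ C → q ∈ C → η q ≤ η p → η (p - q) ≤ η p - η q + w) :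
    ∀ (fuel : ℕ) (l : List (ℝ × ℝ)) (s : ℝ × ℝ), l.length ≤ fuel →
      l.Pairwise (fun a b => η a ≤ η b) → (∀ x ∈ l, x ∈ C) → s ∈ C →
      (∀ x ∈ l, η s ≤ η x) → l ≠ [] →
      makespan η s (buildT fuel l) ≤ (1 - η s) + w * ((Nat.log 2 l.length : ℝ) + 1) := by
  intro fuel
  induction fuel with
  | zero =>
    intro l s hlen _ _ _ _ hne
    exact absurd (List.eq_nil_of_length_eq_zero (Nat.le_zero.mp hlen)) hne
  | succ f ih =>
    intro l s hlen hsort hmem hsC hge hne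
    cases l with
    | nil => exact absurd rfl hne
    | cons p rest =>
      have hpC : p ∈ C := hmem p (List.mem_cons_self)
      have hp1 : η p ≤ 1 := hC1 p hpC
      obtain ⟨hhead, htail⟩ := List.pairwise_cons.mp hsort
      have hrlen : rest.length ≤ f := by simpa using hlen
      have key : ∀ l' : List (ℝ × ℝ), l'.length ≤ f →
          l'.Pairwise (fun a b => η a ≤ η b) → (∀ x ∈ l', x ∈ C) →
          (∀ x ∈ l', η p ≤ η x) → 2 * l'.length ≤ rest.length + 1 →
          makespan η p (buildT f l') ≤
            (1 - η p) + w * (Nat.log 2 (rest.length + 1) : ℝ) := by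
        intro l' h1 h2 h3 h4 h5
        rcases eq_or_ne l' [] with h | h
        · subst h
          rw [buildT_nil]
          show (0 : ℝ) ≤ _
          have hwl : (0 : ℝ) ≤ w * (Nat.log 2 (rest.length + 1) : ℝ) := by positivity
          linarith
        · have hb := ih l' p h1 h2 h3 hpC h4 h
          have hl0 : l'.length ≠ 0 := fun hc => h (List.eq_nil_of_length_eq_zero hc)
          have hlog : Nat.log 2 l'.length + 1 ≤ Nat.log 2 (rest.length + 1) := by
            calc Nat.log 2 l'.length + 1 = Nat.log 2 (l'.length * 2) :=
                  (Nat.log_mul_base (by norm_num) hl0).symm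
              _ ≤ Nat.log 2 (rest.length + 1) := Nat.log_mono_right (by omega)
          have hlogR : ((Nat.log 2 l'.length : ℝ) + 1) ≤ (Nat.log 2 (rest.length + 1) : ℝ) := by
            exact_mod_cast hlog
          refine hb.trans ?_
          have := mul_le_mul_of_nonneg_left hlogR hw0
          linarith
      set k := rest.length / 2 with hk
      have hmem1 : ∀ x ∈ rest.take k, x ∈ C :=
        fun x hx => hmem x (List.mem_cons_of_mem _ (List.take_subset _ _ hx))
      have hmem2 : ∀ x ∈ rest.drop k, x ∈ C :=
        fun x hx => hmem x (List.mem_cons_of_mem _ (List.drop_subset _ _ hx))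
      have hge1 : ∀ x ∈ rest.take k, η p ≤ η x :=
        fun x hx => hhead x (List.take_subset _ _ hx)
      have hge2 : ∀ x ∈ rest.drop k, η p ≤ η x :=
        fun x hx => hhead x (List.drop_subset _ _ hx)
      have hsort1 : (rest.take k).Pairwise (fun a b => η a ≤ η b) :=
        htail.sublist (List.take_sublist _ _)
      have hsort2 : (rest.drop k).Pairwise (fun a b => η a ≤ η b) :=
        htail.sublist (List.drop_sublist _ _)
      have hlen1 : (rest.take k).length ≤ f := by rw [List.length_take]; omega
      have hlen2 : (rest.drop k).length ≤ f := by rw [List.length_drop]; omega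
      have hsz1 : 2 * (rest.take k).length ≤ rest.length + 1 := by
        rw [List.length_take]; omega
      have hsz2 : 2 * (rest.drop k).length ≤ rest.length + 1 := by
        rw [List.length_drop]; omega
      have e1 := key _ hlen1 hsort1 hmem1 hge1 hsz1
      have e2 := key _ hlen2 hsort2 hmem2 hge2 hsz2
      have hedge' : η (p - s) ≤ η p - η s + w :=
        hedge p s hpC hsC (hge p (List.mem_cons_self))
      show η (p - s) + max (makespan η p (buildT f (rest.take k)))
          (makespan η p (buildT f (rest.drop k))) ≤ _
      have hmax := max_le e1 e2
      have hlc : (p :: rest).length = rest.length + 1 := List.length_cons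
      rw [hlc]
      have hr : w * ((Nat.log 2 (rest.length + 1) : ℝ) + 1) =
          w * (Nat.log 2 (rest.length + 1) : ℝ) + w := by ring
      linarith
/-- Heap-Strategy bound: if `n ≥ 1` points lie in a cone of arc-length
`w ∈ [0, 2π(η))` with apex at the origin, then there is a wake-up tree rooted at the origin
of makespan at most `1 + w·⌊log₂ n⌋`. -/
theorem ftp_cone_heap_strategy (η : ℝ × ℝ → ℝ) (hη : IsNorm η) (α w : ℝ)
    (hw0 : 0 ≤ w) (hw : w < 2 * piEta η)
    (ps : List (ℝ × ℝ)) (hne : 1 ≤ ps.length) (hin : ∀ p ∈ ps, p ∈ cone η α w) :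
    ∃ T : BTree (ℝ × ℝ), T.labels = ↑ps ∧
      makespan η 0 T ≤ 1 + w * (Nat.log 2 ps.length : ℝ) := by
  classical
  have hC1 : ∀ x ∈ cone η α w, η x ≤ 1 := fun x hx => cone_eta hη hx
  have hedge : ∀ p q : ℝ × ℝ, p ∈ cone η α w → q ∈ cone η α w → η q ≤ η p →
      η (p - q) ≤ η p - η q + w := fun p q hp hq h => cone_edge hη hp hq h
  set r : ℝ × ℝ → ℝ × ℝ → Prop := fun a b => η a ≤ η b with hr
  haveI : DecidableRel r := Classical.decRel _
  haveI : IsTotal (ℝ × ℝ) r := ⟨fun a b => le_total _ _⟩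
  haveI : IsTrans (ℝ × ℝ) r := ⟨fun a b c hab hbc => le_trans hab hbc⟩
  set sorted := List.insertionSort r ps with hsorted
  have hperm : sorted.Perm ps := List.perm_insertionSort r ps
  have hlen : sorted.length = ps.length := hperm.length_eq
  have hsort : sorted.Pairwise r := List.pairwise_insertionSort r ps
  have hmem : ∀ x ∈ sorted, x ∈ cone η α w := fun x hx => hin x (hperm.subset hx)
  refine ⟨buildT sorted.length sorted, ?_, ?_⟩
  · rw [buildT_labels _ _ le_rfl]
    exact Multiset.coe_eq_coe.mpr hperm
  · cases hso : sorted with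
    | nil =>
      rw [hso] at hlen
      simp at hlen
      omega
    | cons p rest =>
      rw [hso] at hsort hmem hlen
      have hpC : p ∈ cone η α w := hmem p (List.mem_cons_self)
      have hp1 : η p ≤ 1 := hC1 p hpC
      obtain ⟨hhead, htail⟩ := List.pairwise_cons.mp hsort
      have key : ∀ l' : List (ℝ × ℝ), l'.length ≤ rest.length →
          l'.Pairwise (fun a b => η a ≤ η b) → (∀ x ∈ l', x ∈ cone η α w) →
          (∀ x ∈ l', η p ≤ η x) → 2 * l'.length ≤ rest.length + 1 →
          makespan η p (buildT rest.length l') ≤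
            (1 - η p) + w * (Nat.log 2 (rest.length + 1) : ℝ) := by
        intro l' h1 h2 h3 h4 h5
        rcases eq_or_ne l' [] with h | h
        · subst h
          rw [buildT_nil]
          show (0 : ℝ) ≤ _
          have hwl : (0 : ℝ) ≤ w * (Nat.log 2 (rest.length + 1) : ℝ) := by positivity
          linarith
        · have hb := buildT_makespan η hη w hw0 (cone η α w) hC1 hedge
            rest.length l' p h1 h2 h3 hpC h4 h
          have hl0 : l'.length ≠ 0 := fun hc => h (List.eq_nil_of_length_eq_zero hc)
          have hlog : Nat.log 2 l'.length + 1 ≤ Nat.log 2 (rest.length + 1) := by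
            calc Nat.log 2 l'.length + 1 = Nat.log 2 (l'.length * 2) :=
                  (Nat.log_mul_base (by norm_num) hl0).symm
              _ ≤ Nat.log 2 (rest.length + 1) := Nat.log_mono_right (by omega)
          have hlogR : ((Nat.log 2 l'.length : ℝ) + 1) ≤ (Nat.log 2 (rest.length + 1) : ℝ) := by
            exact_mod_cast hlog
          refine hb.trans ?_
          have := mul_le_mul_of_nonneg_left hlogR hw0
          linarith
      set k := rest.length / 2 with hk
      have hmem1 : ∀ x ∈ rest.take k, x ∈ cone η α w :=
        fun x hx => hmem x (List.mem_cons_of_mem _ (List.take_subset _ _ hx))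
      have hmem2 : ∀ x ∈ rest.drop k, x ∈ cone η α w :=
        fun x hx => hmem x (List.mem_cons_of_mem _ (List.drop_subset _ _ hx))
      have hge1 : ∀ x ∈ rest.take k, η p ≤ η x :=
        fun x hx => hhead x (List.take_subset _ _ hx)
      have hge2 : ∀ x ∈ rest.drop k, η p ≤ η x :=
        fun x hx => hhead x (List.drop_subset _ _ hx)
      have hsort1 : (rest.take k).Pairwise (fun a b => η a ≤ η b) :=
        htail.sublist (List.take_sublist _ _)
      have hsort2 : (rest.drop k).Pairwise (fun a b => η a ≤ η b) :=
        htail.sublist (List.drop_sublist _ _)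
      have hlen1 : (rest.take k).length ≤ rest.length := by rw [List.length_take]; omega
      have hlen2 : (rest.drop k).length ≤ rest.length := by rw [List.length_drop]; omega
      have hsz1 : 2 * (rest.take k).length ≤ rest.length + 1 := by
        rw [List.length_take]; omega
      have hsz2 : 2 * (rest.drop k).length ≤ rest.length + 1 := by
        rw [List.length_drop]; omega
      have e1 := key _ hlen1 hsort1 hmem1 hge1 hsz1
      have e2 := key _ hlen2 hsort2 hmem2 hge2 hsz2
      have hL : (p :: rest).length = rest.length + 1 := rfl
      rw [← hlen, hL]
      show η (p - 0) + max (makespan η p (buildT rest.length (rest.take k)))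
          (makespan η p (buildT rest.length (rest.drop k))) ≤ _
      rw [sub_zero]
      have hmax := max_le e1 e2
      linarith
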